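/- Let P and R be finite posets, n ≥ 1, and let φ : [n]×P → R be an isotone map whose fibers are bistrict chains in [n]×P^op. Let L^φ(n,P) ⊆ k[x_R] be the ideal generated by the image of L(n,P) under the ring map x_{(i,p)} ↦ x_{φ(i,p)}, and let L^{φ^τ}(P,n) ⊆ k[x_R] be the ideal generated by the image of L(P,n) under the ring map x_{(p,i)} ↦ x_{φ(i,p)}. Then L^φ(n,P) and L^{φ^τ}(P,n) are Alexander dual: a monomial m of k[x_R] lies in L^{φ^τ}(P,n) if and only if m has a nontrivial common divisor with every monomial of L^φ(n,P). -/

import Mathlib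

open MvPolynomial

private lemma prodX_eq {σ k α : Type*} [CommSemiring k] (s : Finset α) (f : α → σ) :
    (∏ a ∈ s, (X (f a) : MvPolynomial σ k)) =
      monomial (∑ a ∈ s, Finsupp.single (f a) 1) 1 := by
  classical
  induction s using Finset.induction_on with
  | empty => simp [monomial_zero', C_1]
  | insert a s h ih =>
      rw [Finset.prod_insert h, Finset.sum_insert h, ih, X, monomial_mul, one_mul]

private lemma rename_prodX {σ τ k α : Type*} [CommSemiring k] [Fintype α]
    (g : σ → τ) (f : α → σ) :
    rename g (∏ a : α, (X (f a) : MvPolynomial σ k)) =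
      monomial (∑ a : α, Finsupp.single (g (f a)) 1) 1 := by
  rw [prodX_eq, rename_monomial, Finsupp.mapDomain_finset_sum]
  simp [Finsupp.mapDomain_single]

private lemma fin_fixed_point {n : ℕ} (hn : 1 ≤ n) (f : Fin n → Fin n)
    (hf : Monotone f) : ∃ i, f i = i := by
  classical
  have h0 : 0 < n := hn
  let A : Finset (Fin n) := Finset.univ.filter (fun i => f i ≤ i)
  have hA : A.Nonempty := by
    refine ⟨⟨n - 1, by omega⟩, ?_⟩
    simp only [A, Finset.mem_filter, Finset.mem_univ, true_and]
    have hlt := (f ⟨n - 1, by omega⟩).isLt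
    exact Fin.le_def.2 (by simp only [Fin.val_mk]; omega)
  let i := A.min' hA
  have hi : f i ≤ i := (Finset.mem_filter.1 (A.min'_mem hA)).2
  have hfi : f i ∈ A := by
    simp only [A, Finset.mem_filter, Finset.mem_univ, true_and]
    exact hf hi
  exact ⟨i, le_antisymm hi (A.min'_le _ hfi)⟩

private lemma core_exists_psi {P R : Type*} [PartialOrder P] {n : ℕ} (hn : 1 ≤ n)
    (φ : Fin n × P → R) (S : Set R)
    (hyp : ∀ c : Fin n → P, Monotone c → ∃ i, φ (i, c i) ∈ S) :
    ∃ ψ : P → Fin n, Monotone ψ ∧ ∀ p, φ (ψ p, p) ∈ S := by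
  classical
  -- `Bad j p` : position `(j, p)` avoids `S`
  set Bad : ℕ → P → Prop := fun j p => ∃ h : j < n, φ (⟨j, h⟩, p) ∉ S with hBadDef
  -- `W j p` : there is a monotone chain ending at `p` in step `j` avoiding `S` throughout
  set W : ℕ → P → Prop := fun j p =>
    ∃ c : ℕ → P, Monotone c ∧ c j = p ∧ ∀ i ≤ j, Bad i (c i) with hWDef
  have hWlt : ∀ j p, W j p → j + 1 < n := by
    intro j p ⟨c, hc, hcj, hbad⟩
    by_contra hle
    push_neg at hle
    -- every i < n satisfies i ≤ j
    have hall : ∀ i : Fin n, Bad i.1 (c i.1) := fun i => hbad i.1 (by omega)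
    have hcmono : Monotone (fun i : Fin n => c i.1) :=
      fun a b hab => hc (Fin.le_def.1 hab)
    obtain ⟨i, hiS⟩ := hyp _ hcmono
    obtain ⟨hlt, hnot⟩ := hall i
    exact hnot (by simpa using hiS)
  set pred : P → ℕ → Prop := fun q j => ∃ p, p ≤ q ∧ W j p with hpredDef
  set G : P → ℕ := fun q => Nat.findGreatest (pred q) n with hGDef
  have hpredG : ∀ q, (∃ j, pred q j) → pred q (G q) := by
    rintro q ⟨j, hj⟩
    obtain ⟨p, hpq, hW⟩ := id hj
    have hjn : j ≤ n := by have := hWlt j p hW; omega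
    exact Nat.findGreatest_spec hjn hj
  have hGlt : ∀ q, (∃ j, pred q j) → G q + 1 < n := by
    intro q h
    obtain ⟨p, hpq, hW⟩ := hpredG q h
    exact hWlt _ _ hW
  set ψv : P → ℕ := fun q => if h : ∃ j, pred q j then G q + 1 else 0 with hψvDef
  have hψvlt : ∀ q, ψv q < n := by
    intro q
    simp only [ψv]
    split
    · next h => exact hGlt q h
    · omega
  set ψ : P → Fin n := fun q => ⟨ψv q, hψvlt q⟩ with hψdef
  refine ⟨ψ, ?_, ?_⟩
  · -- monotone
    intro q q' hqq'
    simp only [ψ, Fin.mk_le_mk, ψv]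
    split
    · next h =>
        have h' : ∃ j, pred q' j := by
          obtain ⟨j, p, hpq, hW⟩ := h
          exact ⟨j, p, hpq.trans hqq', hW⟩
        rw [dif_pos h']
        have hGq : pred q' (G q) := by
          obtain ⟨p, hpq, hW⟩ := hpredG q h
          exact ⟨p, hpq.trans hqq', hW⟩
        have : G q ≤ n := by have := hGlt q h; omega
        exact Nat.succ_le_succ (Nat.le_findGreatest this hGq)
    · exact Nat.zero_le _
  · -- selector
    intro q
    by_contra hns
    by_cases h : ∃ j, pred q j
    · have hval : ψ q = ⟨G q + 1, hGlt q h⟩ :=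
        Fin.ext (by simp only [ψ, ψv]; rw [dif_pos h])
      rw [hval] at hns
      have hWq : W (G q + 1) q := by
        obtain ⟨p, hpq, c, hc, hcG, hbad⟩ := hpredG q h
        refine ⟨fun i => if i ≤ G q then c i else q, ?_, ?_, ?_⟩
        · intro a b hab
          by_cases ha : a ≤ G q
          · by_cases hb : b ≤ G q
            · simp only [if_pos ha, if_pos hb]; exact hc hab
            · simp only [if_pos ha, if_neg hb]
              calc c a ≤ c (G q) := hc ha
                _ = p := hcG
                _ ≤ q := hpq
          · have hb : ¬ b ≤ G q := by omega
            simp only [if_neg ha, if_neg hb]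
            exact le_rfl
        · simp only [if_neg (by omega : ¬ G q + 1 ≤ G q)]
        · intro i hi
          by_cases hig : i ≤ G q
          · simpa only [if_pos hig] using hbad i hig
          · have : i = G q + 1 := by omega
            subst this
            simp only [if_neg hig]
            exact ⟨hGlt q h, hns⟩
      have hpred1 : pred q (G q + 1) := ⟨q, le_refl q, hWq⟩
      have hle : G q + 1 ≤ n := by have := hWlt _ _ hWq; omega
      exact Nat.findGreatest_is_greatest (Nat.lt_succ_self _) hle hpred1
    · have hval : ψ q = ⟨0, hn⟩ :=
        Fin.ext (by simp only [ψ, ψv]; rw [dif_neg h])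
      rw [hval] at hns
      have hW0 : W 0 q := by
        refine ⟨fun _ => q, monotone_const, rfl, ?_⟩
        intro i hi
        interval_cases i
        exact ⟨hn, hns⟩
      exact h ⟨0, q, le_refl q, hW0⟩

private lemma monomial_mem_iff {k β γ R : Type*} [Field k] [Fintype β]
    [Preorder β] [Preorder γ] (g : β × γ → R) (d : R →₀ ℕ) :
    monomial d (1 : k) ∈ Ideal.map (rename g)
        (Ideal.span { m : MvPolynomial (β × γ) k |
          ∃ c : β → γ, Monotone c ∧ m = ∏ a : β, X (a, c a) }) ↔
      ∃ c : β → γ, Monotone c ∧ (∑ a : β, Finsupp.single (g (a, c a)) 1) ≤ d := by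
  classical
  rw [Ideal.map_span]
  have himg : (⇑(rename g) '' { m : MvPolynomial (β × γ) k |
          ∃ c : β → γ, Monotone c ∧ m = ∏ a : β, X (a, c a) })
      = (fun s => monomial s (1 : k)) ''
        { u | ∃ c : β → γ, Monotone c ∧ u = ∑ a : β, Finsupp.single (g (a, c a)) 1 } := by
    ext m
    simp only [Set.mem_image, Set.mem_setOf_eq]
    constructor
    · rintro ⟨_, ⟨c, hc, rfl⟩, rfl⟩
      exact ⟨_, ⟨c, hc, rfl⟩, (rename_prodX g (fun a => (a, c a))).symm⟩
    · rintro ⟨u, ⟨c, hc, rfl⟩, rfl⟩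
      exact ⟨∏ a : β, X (a, c a), ⟨c, hc, rfl⟩, rename_prodX g (fun a => (a, c a))⟩
  rw [himg, mem_ideal_span_monomial_image]
  rw [support_monomial, if_neg (one_ne_zero : (1 : k) ≠ 0)]
  simp only [Finset.mem_singleton, forall_eq, Set.mem_setOf_eq]
  constructor
  · rintro ⟨u, ⟨c, hc, rfl⟩, hle⟩
    exact ⟨c, hc, hle⟩
  · rintro ⟨c, hc, hle⟩
    exact ⟨_, ⟨c, hc, rfl⟩, hle⟩

private lemma sum_single_apply_eq' {α R : Type*} [Fintype α] [DecidableEq R] (f : α → R) (r : R) :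
    (∑ a : α, Finsupp.single (f a) (1:ℕ)) r = ∑ a : α, if f a = r then 1 else 0 := by
  rw [Finsupp.finset_sum_apply]
  exact Finset.sum_congr rfl fun a _ => Finsupp.single_apply

private lemma one_le_sum_single' {α R : Type*} [Fintype α] (f : α → R) (i : α) :
    1 ≤ (∑ a : α, Finsupp.single (f a) (1:ℕ)) (f i) :=
  calc (1:ℕ) = (Finsupp.single (f i) 1 : R →₀ ℕ) (f i) := (Finsupp.single_eq_same).symm
    _ ≤ ∑ a : α, (Finsupp.single (f a) (1:ℕ) : R →₀ ℕ) (f i) :=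
        Finset.single_le_sum (f := fun a => (Finsupp.single (f a) (1:ℕ) : R →₀ ℕ) (f i))
          (fun a _ => Nat.zero_le _) (Finset.mem_univ i)
    _ = _ := (Finsupp.finset_sum_apply _ _ _).symm

private lemma support_sum_single' {α R : Type*} [Fintype α] (f : α → R) (r : R)
    (h : r ∈ (∑ a : α, Finsupp.single (f a) (1:ℕ)).support) : ∃ a, f a = r := by
  classical
  rw [Finsupp.mem_support_iff, sum_single_apply_eq'] at h
  by_contra hno
  push_neg at hno
  exact h (Finset.sum_eq_zero fun a _ => if_neg (hno a))

private lemma sum_single_le' {α R : Type*} [Fintype α] (f : α → R)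
    (hinj : Function.Injective f) (d : R →₀ ℕ) (hmem : ∀ a, f a ∈ d.support) :
    (∑ a : α, Finsupp.single (f a) (1:ℕ)) ≤ d := by
  classical
  rw [Finsupp.le_iff]
  intro r hr
  obtain ⟨a0, ha0⟩ := support_sum_single' f r hr
  have hd : 1 ≤ d r := by
    have h1 := hmem a0
    rw [ha0] at h1
    exact Nat.one_le_iff_ne_zero.2 (Finsupp.mem_support_iff.1 h1)
  rw [sum_single_apply_eq']
  calc ∑ a : α, (if f a = r then 1 else 0)
      ≤ ∑ a : α, (if a = a0 then 1 else 0) := by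
        refine Finset.sum_le_sum fun a _ => ?_
        by_cases h : f a = r
        · have : a = a0 := hinj (by rw [h, ha0])
          simp [this, ha0]
        · simp [h]
    _ = 1 := by simp
    _ ≤ d r := hd

/-- If `φ : [n] × P → R` is an isotone map whose fibers are bistrict chains in
`[n] × P^op`, then `L^φ(n,P)` and `L^{φ^τ}(P,n)` are Alexander dual in `k[x_R]`. -/
theorem quotient_letterplace_alexander_dual
    (k : Type*) [Field k]
    {P R : Type*} [PartialOrder P] [Fintype P] [PartialOrder R] [Fintype R]
    (n : ℕ) (hn : 1 ≤ n)
    (φ : Fin n × P → R) (hφ : Monotone φ)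
    (hfib : ∀ v w : Fin n × P, φ v = φ w → v ≠ w →
      (v.1 < w.1 ∧ w.2 < v.2) ∨ (w.1 < v.1 ∧ v.2 < w.2))
    (Lφ : Ideal (MvPolynomial R k))
    (hLφ : Lφ = Ideal.map (rename φ)
      (Ideal.span { m : MvPolynomial (Fin n × P) k |
        ∃ c : Fin n → P, Monotone c ∧ m = ∏ i : Fin n, X (i, c i) }))
    (Lτ : Ideal (MvPolynomial R k))
    (hLτ : Lτ = Ideal.map (rename fun v : P × Fin n => φ (v.2, v.1))
      (Ideal.span { m : MvPolynomial (P × Fin n) k |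
        ∃ c : P → Fin n, Monotone c ∧ m = ∏ p : P, X (p, c p) }))
    (d : R →₀ ℕ) :
    monomial d (1 : k) ∈ Lτ ↔
      ∀ e : R →₀ ℕ, monomial e (1 : k) ∈ Lφ →
        ∃ r : R, r ∈ d.support ∧ r ∈ e.support := by
  classical
  have hmemτ : monomial d (1:k) ∈ Lτ ↔
      ∃ ψ : P → Fin n, Monotone ψ ∧ (∑ p : P, Finsupp.single (φ (ψ p, p)) 1) ≤ d := by
    rw [hLτ]
    exact monomial_mem_iff (fun v : P × Fin n => φ (v.2, v.1)) d
  have hmemφ : ∀ e : R →₀ ℕ, monomial e (1:k) ∈ Lφ ↔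
      ∃ c : Fin n → P, Monotone c ∧ (∑ i : Fin n, Finsupp.single (φ (i, c i)) 1) ≤ e := by
    intro e
    rw [hLφ]
    exact monomial_mem_iff φ e
  have hinj : ∀ ψ : P → Fin n, Monotone ψ →
      Function.Injective (fun p => φ (ψ p, p)) := by
    intro ψ hψ p p' heq
    by_contra hne
    rcases hfib (ψ p, p) (ψ p', p') heq
        (fun hpair => hne (congrArg Prod.snd hpair)) with ⟨h1, h2⟩ | ⟨h1, h2⟩
    · exact absurd (hψ h2.le) (not_le.2 h1)
    · exact absurd (hψ h2.le) (not_le.2 h1)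
  rw [hmemτ]
  constructor
  · rintro ⟨ψ, hψ, hle⟩ e he
    obtain ⟨c, hc, hce⟩ := (hmemφ e).1 he
    obtain ⟨i, hi⟩ := fin_fixed_point hn (ψ ∘ c) (hψ.comp hc)
    have hi' : ψ (c i) = i := hi
    refine ⟨φ (i, c i), ?_, ?_⟩
    · rw [Finsupp.mem_support_iff]
      have h1 : 1 ≤ (∑ p : P, Finsupp.single (φ (ψ p, p)) 1) (φ (i, c i)) := by
        have h := one_le_sum_single' (fun p => φ (ψ p, p)) (c i)
        rw [hi'] at h
        exact h
      have h2 := (Finsupp.le_iff _ _).1 hle (φ (i, c i))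
        (Finsupp.mem_support_iff.2 (by omega))
      omega
    · rw [Finsupp.mem_support_iff]
      have h1 : 1 ≤ (∑ j : Fin n, Finsupp.single (φ (j, c j)) 1) (φ (i, c i)) :=
        one_le_sum_single' (fun j => φ (j, c j)) i
      have h2 := (Finsupp.le_iff _ _).1 hce (φ (i, c i))
        (Finsupp.mem_support_iff.2 (by omega))
      omega
  · intro hall
    have hyp : ∀ c : Fin n → P, Monotone c → ∃ i, φ (i, c i) ∈ (↑d.support : Set R) := by
      intro c hc
      have hgen : monomial (∑ i : Fin n, Finsupp.single (φ (i, c i)) 1) (1:k) ∈ Lφ :=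
        (hmemφ _).2 ⟨c, hc, le_refl _⟩
      obtain ⟨r, hrd, hre⟩ := hall _ hgen
      obtain ⟨i, hi⟩ := support_sum_single' (fun i => φ (i, c i)) r hre
      exact ⟨i, by rw [hi]; exact hrd⟩
    obtain ⟨ψ, hψ, hS⟩ := core_exists_psi hn φ (↑d.support) hyp
    exact ⟨ψ, hψ, sum_single_le' _ (hinj ψ hψ) d
      (fun p => Finset.mem_coe.1 (hS p))⟩
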